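/- (Brezis well-posedness) Let E be a Banach space, C ⊂ E closed convex, and A(t,·) : C → E, t ∈ [0,T], satisfy: (1) ‖A(t,c₁)−A(t,c₂)‖ ≤ L‖c₁−c₂‖ for all c₁,c₂ ∈ C, t; (2) t ↦ A(t,c) continuous for each c ∈ C; (3) for every R > 0 there is θ > 0 such that c ∈ C, ‖c‖ ≤ R implies c + θA(t,c) ∈ C. Then for every c̄ ∈ C there is a unique C¹ curve c : [0,T] → C with c_0 = c̄ and ċ_t = A(t, c_t); moreover two solutions with initial data c̄¹, c̄² satisfy ‖c¹_t − c²_t‖ ≤ e^{Lt}‖c̄¹ − c̄²‖. -/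

import Mathlib

open Set Real Filter MeasureTheory intervalIntegral

set_option linter.deprecated false
set_option linter.unusedSectionVars false
set_option linter.unusedVariables false

/-- A `C¹` solution on `[0,T]` with values in `C` of the ODE `ċ_t = A(t,c_t)`. -/
def IsBrezisSol {E : Type*} [NormedAddCommGroup E] [NormedSpace ℝ E]
    (C : Set E) (T : ℝ) (A : ℝ → E → E) (c : ℝ → E) : Prop :=
  (∀ t ∈ Set.Icc 0 T, c t ∈ C) ∧
  ContinuousOn c (Set.Icc 0 T) ∧
  (∀ t ∈ Set.Icc 0 T, HasDerivWithinAt c (A t (c t)) (Set.Icc 0 T) t)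

/-- Bundled data for Brezis' existence theorem. -/
structure BrezisData (E : Type*) [NormedAddCommGroup E] [NormedSpace ℝ E] where
  C : Set E
  T : ℝ
  L : ℝ
  M : ℝ
  θ : ℝ
  A : ℝ → E → E
  cbar : E
  hC : IsClosed C
  hconv : Convex ℝ C
  hT : 0 ≤ T
  hL : 0 ≤ L
  hM : 0 ≤ M
  hθ : 0 < θ
  hcbar : cbar ∈ C
  h1 : ∀ t ∈ Set.Icc 0 T, ∀ c₁ ∈ C, ∀ c₂ ∈ C, ‖A t c₁ - A t c₂‖ ≤ L * ‖c₁ - c₂‖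
  h2 : ∀ c ∈ C, ContinuousOn (fun t => A t c) (Set.Icc 0 T)
  hMb : ∀ t ∈ Set.Icc 0 T, ‖A t cbar‖ ≤ M
  hsub : ∀ t ∈ Set.Icc 0 T, ∀ c ∈ C,
    ‖c‖ ≤ ‖cbar‖ + M / (L+1) * (Real.exp ((L+1)*T) - 1) + 1 → c + θ • A t c ∈ C

namespace BrezisData

variable {E : Type*} [NormedAddCommGroup E] [NormedSpace ℝ E] (P : BrezisData E)

noncomputable def lam : ℝ := P.θ⁻¹

lemma lam_pos : 0 < P.lam := inv_pos.2 P.hθ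

/-- The a priori bound function `g t = M/(L+1) (e^{(L+1)t} - 1)`. -/
noncomputable def g (t : ℝ) : ℝ := P.M / (P.L + 1) * (Real.exp ((P.L + 1) * t) - 1)

lemma L1_pos : (0:ℝ) < P.L + 1 := by linarith [P.hL]

lemma g_zero : P.g 0 = 0 := by simp [g]

lemma g_nonneg {t : ℝ} (ht : 0 ≤ t) : 0 ≤ P.g t := by
  have h1 : (1:ℝ) ≤ Real.exp ((P.L+1)*t) := by
    rw [Real.one_le_exp_iff]; exact mul_nonneg P.L1_pos.le ht
  have hL1 := P.L1_pos
  have hM := P.hM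
  have h2 : 0 ≤ P.M / (P.L+1) := by positivity
  unfold g
  nlinarith

lemma g_mono : MonotoneOn P.g (Set.Icc 0 P.T) := by
  intro s hs t ht hst
  have : Real.exp ((P.L+1)*s) ≤ Real.exp ((P.L+1)*t) := by
    apply Real.exp_le_exp.2
    exact mul_le_mul_of_nonneg_left hst P.L1_pos.le
  have hM := P.hM
  have hL1 := P.L1_pos
  unfold g
  have h2 : Real.exp ((P.L+1)*s) - 1 ≤ Real.exp ((P.L+1)*t) - 1 := by linarith
  apply mul_le_mul_of_nonneg_left h2
  positivity

lemma hasDerivAt_g (t : ℝ) : HasDerivAt P.g (P.M * Real.exp ((P.L+1)*t)) t := by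
  have h : HasDerivAt (fun t => Real.exp ((P.L+1)*t)) (Real.exp ((P.L+1)*t) * (P.L+1)) t := by
    simpa using ((hasDerivAt_id t).const_mul (P.L+1)).exp
  have h2 := ((h.sub_const 1).const_mul (P.M / (P.L+1)))
  refine h2.congr_deriv ?_
  have := P.L1_pos
  rw [div_mul_eq_mul_div, div_eq_iff this.ne']
  ring

lemma g_bound {t : ℝ} (ht : 0 ≤ t) : P.M + P.L * P.g t ≤ P.M * Real.exp ((P.L+1)*t) := by
  have h1 : (1:ℝ) ≤ Real.exp ((P.L+1)*t) := by
    rw [Real.one_le_exp_iff]; exact mul_nonneg P.L1_pos.le ht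
  have hL1 := P.L1_pos
  have hM := P.hM
  have hL := P.hL
  rw [g]
  have key : P.L * (P.M / (P.L+1) * (Real.exp ((P.L+1)*t) - 1))
      ≤ P.M * (Real.exp ((P.L+1)*t) - 1) := by
    rw [mul_comm P.L, mul_assoc, div_mul_eq_mul_div, div_le_iff₀ hL1]
    nlinarith
  nlinarith

noncomputable def proj (t : ℝ) : Set.Icc (0:ℝ) P.T := Set.projIcc 0 P.T P.hT t

lemma proj_coe {t : ℝ} (ht : t ∈ Set.Icc 0 P.T) : ((P.proj t : Set.Icc (0:ℝ) P.T) : ℝ) = t := by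
  rw [proj, Set.projIcc_of_mem P.hT ht]

lemma proj_mem (t : ℝ) : ((P.proj t : Set.Icc (0:ℝ) P.T) : ℝ) ∈ Set.Icc 0 P.T := (P.proj t).2

/-- The space of candidate curves: continuous maps `[0,T] → C` with the a priori bound. -/
def funSet : Set C(Set.Icc (0:ℝ) P.T, E) :=
  {f | ∀ s : Set.Icc (0:ℝ) P.T, f s ∈ P.C ∧ ‖f s - P.cbar‖ ≤ P.g s}

lemma isClosed_funSet : IsClosed P.funSet := by
  have : P.funSet = ⋂ s : Set.Icc (0:ℝ) P.T,
      ((fun f : C(Set.Icc (0:ℝ) P.T, E) => f s) ⁻¹' P.C) ∩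
      ((fun f : C(Set.Icc (0:ℝ) P.T, E) => f s) ⁻¹' Metric.closedBall P.cbar (P.g s)) := by
    ext f
    simp only [funSet, Set.mem_setOf_eq, Set.mem_iInter, Set.mem_inter_iff, Set.mem_preimage,
      Metric.mem_closedBall, dist_eq_norm]
  rw [this]
  exact isClosed_iInter fun s => IsClosed.inter
    (P.hC.preimage (continuous_eval_const s))
    (Metric.isClosed_closedBall.preimage (continuous_eval_const s))

lemma const_mem_funSet : (ContinuousMap.const _ P.cbar) ∈ P.funSet := by
  intro s
  refine ⟨P.hcbar, ?_⟩
  simp only [ContinuousMap.const_apply, sub_self, norm_zero]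
  exact P.g_nonneg s.2.1

noncomputable def ext (f : C(Set.Icc (0:ℝ) P.T, E)) : ℝ → E := fun t => f (P.proj t)

lemma ext_eq (f : C(Set.Icc (0:ℝ) P.T, E)) (u : Set.Icc (0:ℝ) P.T) : P.ext f u = f u := by
  rw [ext, proj, Set.projIcc_val]

lemma continuous_ext (f : C(Set.Icc (0:ℝ) P.T, E)) : Continuous (P.ext f) :=
  f.continuous.comp (continuous_projIcc (h := P.hT))

lemma ext_mem {f : C(Set.Icc (0:ℝ) P.T, E)} (hf : f ∈ P.funSet) (t : ℝ) : P.ext f t ∈ P.C :=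
  (hf (P.proj t)).1

lemma ext_bound {f : C(Set.Icc (0:ℝ) P.T, E)} (hf : f ∈ P.funSet) {t : ℝ}
    (ht : t ∈ Set.Icc 0 P.T) : ‖P.ext f t - P.cbar‖ ≤ P.g t := by
  have := (hf (P.proj t)).2
  rwa [P.proj_coe ht] at this

lemma ext_norm_le {f : C(Set.Icc (0:ℝ) P.T, E)} (hf : f ∈ P.funSet) (t : ℝ) :
    ‖P.ext f t‖ ≤ ‖P.cbar‖ + P.M / (P.L+1) * (Real.exp ((P.L+1)*P.T) - 1) + 1 := by
  have h1 : ‖P.ext f t‖ ≤ ‖P.cbar‖ + ‖P.ext f t - P.cbar‖ := by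
    have := norm_add_le P.cbar (P.ext f t - P.cbar)
    simpa using this
  have h2 := (hf (P.proj t)).2
  have h3 : P.g ((P.proj t : Set.Icc (0:ℝ) P.T) : ℝ) ≤ P.g P.T :=
    P.g_mono (P.proj_mem t) (Set.right_mem_Icc.2 P.hT) (P.proj_mem t).2
  have h4 : P.g P.T = P.M / (P.L+1) * (Real.exp ((P.L+1)*P.T) - 1) := rfl
  rw [ext] at h1
  rw [ext]
  nlinarith [h2, h3]

/-- Joint continuity of `s ↦ A s (c s)` for curves with values in `C`. -/
lemma contOn_comp {c : ℝ → E} (hc : ContinuousOn c (Set.Icc 0 P.T))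
    (hmem : ∀ t ∈ Set.Icc 0 P.T, c t ∈ P.C) :
    ContinuousOn (fun s => P.A s (c s)) (Set.Icc 0 P.T) := by
  intro t ht
  have h2' : ContinuousWithinAt (fun s => P.A s (c t)) (Set.Icc 0 P.T) t :=
    P.h2 (c t) (hmem t ht) t ht
  have hdiff : Tendsto (fun s => P.A s (c s) - P.A s (c t)) (nhdsWithin t (Set.Icc 0 P.T)) (nhds 0) := by
    apply squeeze_zero_norm'
    · filter_upwards [self_mem_nhdsWithin] with s hs
      exact P.h1 s hs _ (hmem s hs) _ (hmem t ht)
    · have hnorm : Tendsto (fun s => P.L * ‖c s - c t‖) (nhdsWithin t (Set.Icc 0 P.T))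
          (nhds (P.L * ‖c t - c t‖)) :=
        tendsto_const_nhds.mul (((hc t ht).sub tendsto_const_nhds).norm)
      simpa using hnorm
  have : Tendsto (fun s => (P.A s (c s) - P.A s (c t)) + P.A s (c t))
      (nhdsWithin t (Set.Icc 0 P.T)) (nhds (0 + P.A t (c t))) := hdiff.add h2'
  simpa [ContinuousWithinAt] using this

/-- The (projected) vector field along a curve. -/
noncomputable def vA (f : C(Set.Icc (0:ℝ) P.T, E)) : ℝ → E :=
  fun s => P.A ((P.proj s : Set.Icc (0:ℝ) P.T) : ℝ) (P.ext f s)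

lemma vA_eq {f : C(Set.Icc (0:ℝ) P.T, E)} {s : ℝ} (hs : s ∈ Set.Icc 0 P.T) :
    P.vA f s = P.A s (P.ext f s) := by rw [vA, P.proj_coe hs]

lemma continuous_vA {f : C(Set.Icc (0:ℝ) P.T, E)} (hf : f ∈ P.funSet) :
    Continuous (P.vA f) := by
  have h : ContinuousOn (fun s => P.A s (P.ext f s)) (Set.Icc 0 P.T) :=
    P.contOn_comp (P.continuous_ext f).continuousOn (fun t _ => P.ext_mem hf t)
  have h2 : Continuous fun u : Set.Icc (0:ℝ) P.T => P.A (u : ℝ) (P.ext f (u : ℝ)) := by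
    exact ContinuousOn.restrict h
  have : P.vA f = (fun u : Set.Icc (0:ℝ) P.T => P.A (u : ℝ) (P.ext f (u : ℝ))) ∘ (P.proj) := by
    funext s
    simp only [Function.comp_apply, vA]
    congr 1
    rw [ext, ext, proj, proj, Set.projIcc_val]
  rw [this]
  exact h2.comp (continuous_projIcc (h := P.hT))

lemma vA_bound {f : C(Set.Icc (0:ℝ) P.T, E)} (hf : f ∈ P.funSet) (s : ℝ) :
    ‖P.vA f s‖ ≤ P.M + P.L * P.g ((P.proj s : Set.Icc (0:ℝ) P.T) : ℝ) := by
  set u := ((P.proj s : Set.Icc (0:ℝ) P.T) : ℝ) with hu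
  have hmem : u ∈ Set.Icc 0 P.T := P.proj_mem s
  have h1 : ‖P.A u (P.ext f s) - P.A u P.cbar‖ ≤ P.L * ‖P.ext f s - P.cbar‖ :=
    P.h1 u hmem _ (P.ext_mem hf s) _ P.hcbar
  have h2 : ‖P.A u P.cbar‖ ≤ P.M := P.hMb u hmem
  have h3 : ‖P.ext f s - P.cbar‖ ≤ P.g u := by
    have := (hf (P.proj s)).2
    rw [ext]
    exact this
  have h4 : ‖P.A u (P.ext f s)‖ ≤ ‖P.A u P.cbar‖ + ‖P.A u (P.ext f s) - P.A u P.cbar‖ := by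
    have := norm_add_le (P.A u P.cbar) (P.A u (P.ext f s) - P.A u P.cbar)
    simpa using this
  have : ‖P.A u (P.ext f s)‖ ≤ P.M + P.L * P.g u := by
    have := mul_le_mul_of_nonneg_left h3 P.hL
    linarith
  exact this

/-- The integrand of the modified Picard map. -/
noncomputable def w (f : C(Set.Icc (0:ℝ) P.T, E)) : ℝ → E :=
  fun s => Real.exp (P.lam * s) • (P.lam • P.ext f s + P.vA f s)

lemma continuous_w {f : C(Set.Icc (0:ℝ) P.T, E)} (hf : f ∈ P.funSet) :
    Continuous (P.w f) :=
  (Real.continuous_exp.comp (continuous_const.mul continuous_id)).smul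
    (((P.continuous_ext f).const_smul _).add (P.continuous_vA hf))

lemma w_eq (f : C(Set.Icc (0:ℝ) P.T, E)) (s : ℝ) :
    P.w f s = (Real.exp (P.lam * s) * P.lam) • (P.ext f s + P.θ • P.vA f s) := by
  rw [w, mul_smul]
  congr 1
  rw [smul_add, smul_smul, lam, inv_mul_cancel₀ P.hθ.ne', one_smul]

lemma y_mem {f : C(Set.Icc (0:ℝ) P.T, E)} (hf : f ∈ P.funSet) (s : ℝ) :
    P.ext f s + P.θ • P.vA f s ∈ P.C :=
  P.hsub _ (P.proj_mem s) _ (P.ext_mem hf s) (P.ext_norm_le hf s)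

/-- The modified Picard map. -/
noncomputable def nextFun (f : C(Set.Icc (0:ℝ) P.T, E)) : ℝ → E :=
  fun t => Real.exp (-(P.lam * t)) • (P.cbar + ∫ s in (0:ℝ)..t, P.w f s)

lemma continuous_nextFun {f : C(Set.Icc (0:ℝ) P.T, E)} (hf : f ∈ P.funSet) :
    Continuous (P.nextFun f) :=
  (Real.continuous_exp.comp (continuous_const.mul continuous_id).neg).smul
    (continuous_const.add
      (intervalIntegral.continuous_primitive (fun a b => (P.continuous_w hf).intervalIntegrable a b) 0))

lemma integral_lam_exp (t : ℝ) :
    ∫ s in (0:ℝ)..t, P.lam * Real.exp (P.lam * s) = Real.exp (P.lam * t) - 1 := by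
  have h : ∀ s ∈ Set.uIcc (0:ℝ) t, HasDerivAt (fun s => Real.exp (P.lam * s))
      (P.lam * Real.exp (P.lam * s)) s := by
    intro s _
    simpa [mul_comm] using ((hasDerivAt_id s).const_mul P.lam).exp
  rw [intervalIntegral.integral_eq_sub_of_hasDerivAt h
    (Continuous.intervalIntegrable (by fun_prop) 0 t)]
  simp

variable [CompleteSpace E]

lemma nextFun_mem {f : C(Set.Icc (0:ℝ) P.T, E)} (hf : f ∈ P.funSet) {t : ℝ}
    (ht : t ∈ Set.Icc 0 P.T) : P.nextFun f t ∈ P.C := by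
  by_contra hmem
  obtain ⟨φ, u, hu, hx⟩ := geometric_hahn_banach_closed_point P.hconv P.hC hmem
  have hwint : IntervalIntegrable (P.w f) volume 0 t := (P.continuous_w hf).intervalIntegrable 0 t
  have hφw : ∀ s, φ (P.w f s) = (P.lam * Real.exp (P.lam * s)) *
      φ (P.ext f s + P.θ • P.vA f s) := by
    intro s
    rw [P.w_eq, φ.map_smul, smul_eq_mul]
    ring
  have hφΦ : φ (P.nextFun f t) = Real.exp (-(P.lam * t)) *
      (φ P.cbar + ∫ s in (0:ℝ)..t, φ (P.w f s)) := by
    rw [nextFun, φ.map_smul, smul_eq_mul, φ.map_add, φ.intervalIntegral_comp_comm hwint]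
  have hIle : (∫ s in (0:ℝ)..t, φ (P.w f s)) ≤ (Real.exp (P.lam * t) - 1) * u := by
    have hcont1 : Continuous fun s => φ (P.w f s) := φ.continuous.comp (P.continuous_w hf)
    have hcont2 : Continuous fun s : ℝ => P.lam * Real.exp (P.lam * s) * u := by fun_prop
    have hptw : ∀ s ∈ Set.Icc 0 t, φ (P.w f s) ≤ P.lam * Real.exp (P.lam * s) * u := by
      intro s _
      rw [hφw s]
      have hpos : 0 ≤ P.lam * Real.exp (P.lam * s) :=
        mul_nonneg P.lam_pos.le (Real.exp_pos _).le
      exact mul_le_mul_of_nonneg_left (hu _ (P.y_mem hf s)).le hpos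
    have hmono := intervalIntegral.integral_mono_on (μ := volume) ht.1
      (hcont1.intervalIntegrable 0 t) (hcont2.intervalIntegrable 0 t) hptw
    calc (∫ s in (0:ℝ)..t, φ (P.w f s)) ≤ ∫ s in (0:ℝ)..t, P.lam * Real.exp (P.lam * s) * u := hmono
      _ = (∫ s in (0:ℝ)..t, P.lam * Real.exp (P.lam * s)) * u := by
          rw [intervalIntegral.integral_mul_const]
      _ = (Real.exp (P.lam * t) - 1) * u := by rw [P.integral_lam_exp]
  have hcb : φ P.cbar < u := hu _ P.hcbar
  have hS : φ P.cbar + (∫ s in (0:ℝ)..t, φ (P.w f s)) < Real.exp (P.lam * t) * u := by nlinarith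
  have hpos : (0:ℝ) < Real.exp (-(P.lam * t)) := Real.exp_pos _
  have hfin := mul_lt_mul_of_pos_left hS hpos
  rw [← mul_assoc, ← Real.exp_add, neg_add_cancel, Real.exp_zero, one_mul] at hfin
  rw [← hφΦ] at hfin
  linarith

lemma nextFun_sub_cbar {f : C(Set.Icc (0:ℝ) P.T, E)} (hf : f ∈ P.funSet) (t : ℝ) :
    P.nextFun f t - P.cbar = Real.exp (-(P.lam * t)) •
      ∫ s in (0:ℝ)..t, (P.w f s - (P.lam * Real.exp (P.lam * s)) • P.cbar) := by
  have hwint : IntervalIntegrable (P.w f) volume 0 t := (P.continuous_w hf).intervalIntegrable 0 t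
  have hint2 : IntervalIntegrable (fun s => (P.lam * Real.exp (P.lam * s)) • P.cbar) volume 0 t :=
    Continuous.intervalIntegrable (by fun_prop) 0 t
  rw [intervalIntegral.integral_sub hwint hint2, intervalIntegral.integral_smul_const,
    P.integral_lam_exp t, nextFun]
  have hab : Real.exp (-(P.lam * t)) * Real.exp (P.lam * t) = 1 := by
    rw [← Real.exp_add, neg_add_cancel, Real.exp_zero]
  set a := Real.exp (-(P.lam * t))
  set b := Real.exp (P.lam * t)
  rw [smul_sub, smul_smul, mul_sub, hab, mul_one]
  rw [sub_smul, one_smul, smul_add]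
  abel

lemma integral_majorant {t : ℝ} (ht : t ∈ Set.Icc 0 P.T) :
    ∫ s in (0:ℝ)..t, Real.exp (P.lam * s) * (P.lam * P.g s + P.M * Real.exp ((P.L+1) * s))
      = Real.exp (P.lam * t) * P.g t := by
  have h : ∀ s ∈ Set.uIcc (0:ℝ) t, HasDerivAt (fun s => Real.exp (P.lam * s) * P.g s)
      (Real.exp (P.lam * s) * (P.lam * P.g s + P.M * Real.exp ((P.L+1) * s))) s := by
    intro s _
    have h1 : HasDerivAt (fun s => Real.exp (P.lam * s)) (P.lam * Real.exp (P.lam * s)) s := by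
      simpa [mul_comm] using ((hasDerivAt_id s).const_mul P.lam).exp
    have := h1.mul (P.hasDerivAt_g s)
    refine this.congr_deriv ?_
    ring
  rw [intervalIntegral.integral_eq_sub_of_hasDerivAt h ?_]
  · rw [mul_zero, P.g_zero, mul_zero, sub_zero]
  · apply Continuous.intervalIntegrable
    have hgc : Continuous P.g := by
      unfold g; fun_prop
    fun_prop

lemma norm_nextFun_sub_le {f : C(Set.Icc (0:ℝ) P.T, E)} (hf : f ∈ P.funSet) {t : ℝ}
    (ht : t ∈ Set.Icc 0 P.T) : ‖P.nextFun f t - P.cbar‖ ≤ P.g t := by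
  rw [P.nextFun_sub_cbar hf t, norm_smul, Real.norm_eq_abs, abs_of_pos (Real.exp_pos _)]
  have hgc : Continuous P.g := by unfold g; fun_prop
  have key : ∀ s ∈ Set.Icc 0 t, ‖P.w f s - (P.lam * Real.exp (P.lam * s)) • P.cbar‖ ≤
      Real.exp (P.lam * s) * (P.lam * P.g s + P.M * Real.exp ((P.L+1) * s)) := by
    intro s hs
    have hsT : s ∈ Set.Icc 0 P.T := ⟨hs.1, hs.2.trans ht.2⟩
    have heq : P.w f s - (P.lam * Real.exp (P.lam * s)) • P.cbar =
        Real.exp (P.lam * s) • (P.lam • (P.ext f s - P.cbar) + P.vA f s) := by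
      rw [w]
      module
    rw [heq, norm_smul, Real.norm_eq_abs, abs_of_pos (Real.exp_pos _)]
    apply mul_le_mul_of_nonneg_left _ (Real.exp_pos _).le
    have h1 : ‖P.lam • (P.ext f s - P.cbar) + P.vA f s‖ ≤
        P.lam * ‖P.ext f s - P.cbar‖ + ‖P.vA f s‖ := by
      refine (norm_add_le _ _).trans ?_
      rw [norm_smul, Real.norm_eq_abs, abs_of_pos P.lam_pos]
    have h2 : ‖P.ext f s - P.cbar‖ ≤ P.g s := P.ext_bound hf hsT
    have h3 : ‖P.vA f s‖ ≤ P.M + P.L * P.g s := by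
      have := P.vA_bound hf s
      rwa [P.proj_coe hsT] at this
    have h4 : P.M + P.L * P.g s ≤ P.M * Real.exp ((P.L+1) * s) := P.g_bound hs.1
    have h5 := mul_le_mul_of_nonneg_left h2 P.lam_pos.le
    linarith
  have hnormle : ‖∫ s in (0:ℝ)..t, (P.w f s - (P.lam * Real.exp (P.lam * s)) • P.cbar)‖ ≤
      Real.exp (P.lam * t) * P.g t := by
    have h6 : ‖∫ s in (0:ℝ)..t, (P.w f s - (P.lam * Real.exp (P.lam * s)) • P.cbar)‖ ≤
        ∫ s in (0:ℝ)..t, ‖P.w f s - (P.lam * Real.exp (P.lam * s)) • P.cbar‖ :=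
      intervalIntegral.norm_integral_le_integral_norm ht.1
    have hcont : Continuous fun s => P.w f s - (P.lam * Real.exp (P.lam * s)) • P.cbar := by
      have := P.continuous_w hf
      fun_prop
    have h7 := intervalIntegral.integral_mono_on (μ := volume) ht.1
      (hcont.norm.intervalIntegrable 0 t)
      ((by fun_prop : Continuous fun s =>
        Real.exp (P.lam * s) * (P.lam * P.g s + P.M * Real.exp ((P.L+1) * s))).intervalIntegrable 0 t)
      key
    rw [P.integral_majorant ht] at h7
    linarith
  calc Real.exp (-(P.lam * t)) * ‖∫ s in (0:ℝ)..t, (P.w f s - (P.lam * Real.exp (P.lam * s)) • P.cbar)‖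
      ≤ Real.exp (-(P.lam * t)) * (Real.exp (P.lam * t) * P.g t) :=
        mul_le_mul_of_nonneg_left hnormle (Real.exp_pos _).le
    _ = P.g t := by
        rw [← mul_assoc, ← Real.exp_add, neg_add_cancel, Real.exp_zero, one_mul]

/-- The Picard map as a self-map of the curve space. -/
noncomputable def next (f : ↥P.funSet) : ↥P.funSet :=
  ⟨⟨fun u : Set.Icc (0:ℝ) P.T => P.nextFun f.1 u,
    (P.continuous_nextFun f.2).comp continuous_subtype_val⟩,
   fun s => ⟨P.nextFun_mem f.2 s.2, P.norm_nextFun_sub_le f.2 s.2⟩⟩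

lemma next_apply (f : ↥P.funSet) (u : Set.Icc (0:ℝ) P.T) :
    (P.next f).1 u = P.nextFun f.1 u := rfl

lemma dist_nextFun_le {f₁ f₂ : C(Set.Icc (0:ℝ) P.T, E)} (hf₁ : f₁ ∈ P.funSet)
    (hf₂ : f₂ ∈ P.funSet) {t : ℝ} (ht : t ∈ Set.Icc 0 P.T) :
    ‖P.nextFun f₁ t - P.nextFun f₂ t‖ ≤
      ∫ s in (0:ℝ)..t, (P.lam + P.L) * ‖P.ext f₁ s - P.ext f₂ s‖ := by
  have hw₁ : IntervalIntegrable (P.w f₁) volume 0 t := (P.continuous_w hf₁).intervalIntegrable 0 t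
  have hw₂ : IntervalIntegrable (P.w f₂) volume 0 t := (P.continuous_w hf₂).intervalIntegrable 0 t
  have hdiff : P.nextFun f₁ t - P.nextFun f₂ t =
      Real.exp (-(P.lam * t)) • ∫ s in (0:ℝ)..t, (P.w f₁ s - P.w f₂ s) := by
    rw [intervalIntegral.integral_sub hw₁ hw₂, nextFun, nextFun]
    module
  have key : ∀ s ∈ Set.Icc 0 t, ‖P.w f₁ s - P.w f₂ s‖ ≤
      Real.exp (P.lam * t) * ((P.lam + P.L) * ‖P.ext f₁ s - P.ext f₂ s‖) := by
    intro s hs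
    have hsT : s ∈ Set.Icc 0 P.T := ⟨hs.1, hs.2.trans ht.2⟩
    have heq : P.w f₁ s - P.w f₂ s = Real.exp (P.lam * s) •
        (P.lam • (P.ext f₁ s - P.ext f₂ s) + (P.vA f₁ s - P.vA f₂ s)) := by
      rw [w, w]; module
    rw [heq, norm_smul, Real.norm_eq_abs, abs_of_pos (Real.exp_pos _)]
    have hvv : ‖P.vA f₁ s - P.vA f₂ s‖ ≤ P.L * ‖P.ext f₁ s - P.ext f₂ s‖ := by
      rw [P.vA_eq hsT, P.vA_eq hsT]
      exact P.h1 s hsT _ (P.ext_mem hf₁ s) _ (P.ext_mem hf₂ s)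
    have h1 : ‖P.lam • (P.ext f₁ s - P.ext f₂ s) + (P.vA f₁ s - P.vA f₂ s)‖ ≤
        (P.lam + P.L) * ‖P.ext f₁ s - P.ext f₂ s‖ := by
      refine (norm_add_le _ _).trans ?_
      rw [norm_smul, Real.norm_eq_abs, abs_of_pos P.lam_pos]
      linarith
    have hexp : Real.exp (P.lam * s) ≤ Real.exp (P.lam * t) :=
      Real.exp_le_exp.2 (mul_le_mul_of_nonneg_left hs.2 P.lam_pos.le)
    have hnn : 0 ≤ ‖P.lam • (P.ext f₁ s - P.ext f₂ s) + (P.vA f₁ s - P.vA f₂ s)‖ := norm_nonneg _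
    calc Real.exp (P.lam * s) * ‖P.lam • (P.ext f₁ s - P.ext f₂ s) + (P.vA f₁ s - P.vA f₂ s)‖
        ≤ Real.exp (P.lam * t) * ‖P.lam • (P.ext f₁ s - P.ext f₂ s) + (P.vA f₁ s - P.vA f₂ s)‖ :=
          mul_le_mul_of_nonneg_right hexp hnn
      _ ≤ Real.exp (P.lam * t) * ((P.lam + P.L) * ‖P.ext f₁ s - P.ext f₂ s‖) :=
          mul_le_mul_of_nonneg_left h1 (Real.exp_pos _).le
  have hcont : Continuous fun s => ‖P.w f₁ s - P.w f₂ s‖ :=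
    ((P.continuous_w hf₁).sub (P.continuous_w hf₂)).norm
  have hcontΔ : Continuous fun s => (P.lam + P.L) * ‖P.ext f₁ s - P.ext f₂ s‖ :=
    continuous_const.mul ((P.continuous_ext f₁).sub (P.continuous_ext f₂)).norm
  have h6 : ‖∫ s in (0:ℝ)..t, (P.w f₁ s - P.w f₂ s)‖ ≤
      ∫ s in (0:ℝ)..t, ‖P.w f₁ s - P.w f₂ s‖ :=
    intervalIntegral.norm_integral_le_integral_norm ht.1
  have h7 := intervalIntegral.integral_mono_on (μ := volume) ht.1
    (hcont.intervalIntegrable 0 t)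
    ((continuous_const.mul hcontΔ).intervalIntegrable 0 t) key
  simp only [Pi.mul_apply] at h7
  rw [intervalIntegral.integral_const_mul] at h7
  rw [hdiff, norm_smul, Real.norm_eq_abs, abs_of_pos (Real.exp_pos _)]
  have h8 : Real.exp (-(P.lam * t)) * ‖∫ s in (0:ℝ)..t, (P.w f₁ s - P.w f₂ s)‖ ≤
      Real.exp (-(P.lam * t)) * (Real.exp (P.lam * t) *
        ∫ s in (0:ℝ)..t, (P.lam + P.L) * ‖P.ext f₁ s - P.ext f₂ s‖) :=
    mul_le_mul_of_nonneg_left (h6.trans h7) (Real.exp_pos _).le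
  rwa [← mul_assoc, ← Real.exp_add, neg_add_cancel, Real.exp_zero, one_mul] at h8

lemma dist_iterate_next_apply_le (f₁ f₂ : ↥P.funSet) (n : ℕ) (t : Set.Icc (0:ℝ) P.T) :
    ‖((P.next)^[n] f₁).1 t - ((P.next)^[n] f₂).1 t‖ ≤
      ((P.lam + P.L) * t) ^ n / n.factorial * dist f₁ f₂ := by
  induction n generalizing t with
  | zero =>
    simp only [Function.iterate_zero, id_eq, pow_zero, Nat.factorial_zero, Nat.cast_one,
      div_one, one_mul]
    rw [← dist_eq_norm]
    calc dist (f₁.1 t) (f₂.1 t) ≤ dist f₁.1 f₂.1 := ContinuousMap.dist_apply_le_dist t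
      _ = dist f₁ f₂ := (Subtype.dist_eq f₁ f₂).symm
  | succ n ihn =>
    rw [Function.iterate_succ_apply', Function.iterate_succ_apply']
    set p := (P.next)^[n] f₁ with hp
    set q := (P.next)^[n] f₂ with hq
    have hle := P.dist_nextFun_le p.2 q.2 t.2
    rw [next_apply, next_apply]
    have hptw : ∀ s ∈ Set.Icc 0 (t:ℝ), (P.lam + P.L) * ‖P.ext p.1 s - P.ext q.1 s‖ ≤
        (P.lam + P.L) * (((P.lam + P.L) * s) ^ n / n.factorial * dist f₁ f₂) := by
      intro s hs
      have hsT : s ∈ Set.Icc 0 P.T := ⟨hs.1, hs.2.trans t.2.2⟩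
      have := ihn (P.proj s)
      rw [P.proj_coe hsT] at this
      have hlamL : 0 ≤ P.lam + P.L := by linarith [P.lam_pos, P.hL]
      apply mul_le_mul_of_nonneg_left _ hlamL
      rw [ext, ext]
      exact this
    have hcont1 : Continuous fun s => (P.lam + P.L) * ‖P.ext p.1 s - P.ext q.1 s‖ :=
      continuous_const.mul ((P.continuous_ext p.1).sub (P.continuous_ext q.1)).norm
    have hcont2 : Continuous fun s : ℝ =>
        (P.lam + P.L) * (((P.lam + P.L) * s) ^ n / n.factorial * dist f₁ f₂) := by fun_prop
    have h7 := intervalIntegral.integral_mono_on (μ := volume) t.2.1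
      (hcont1.intervalIntegrable 0 t) (hcont2.intervalIntegrable 0 t) hptw
    refine hle.trans (h7.trans ?_)
    have hval : ∫ s in (0:ℝ)..(t:ℝ),
        (P.lam + P.L) * (((P.lam + P.L) * s) ^ n / n.factorial * dist f₁ f₂)
        = ((P.lam + P.L) * t) ^ (n+1) / (n+1).factorial * dist f₁ f₂ := by
      have : ∀ s : ℝ, (P.lam + P.L) * (((P.lam + P.L) * s) ^ n / n.factorial * dist f₁ f₂)
          = ((P.lam + P.L) ^ (n+1) / n.factorial * dist f₁ f₂) * s ^ n := by
        intro s; rw [mul_pow]; ring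
      rw [intervalIntegral.integral_congr (fun s _ => this s),
        intervalIntegral.integral_const_mul, integral_pow]
      rw [Nat.factorial_succ, mul_pow]
      push_cast
      have hn : (n.factorial : ℝ) ≠ 0 := by exact_mod_cast n.factorial_ne_zero
      field_simp
      ring
    rw [hval]

lemma dist_iterate_next_le (f₁ f₂ : ↥P.funSet) (n : ℕ) :
    dist ((P.next)^[n] f₁) ((P.next)^[n] f₂) ≤
      ((P.lam + P.L) * P.T) ^ n / n.factorial * dist f₁ f₂ := by
  have hlamL : 0 ≤ P.lam + P.L := by linarith [P.lam_pos, P.hL]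
  have hbase : 0 ≤ (P.lam + P.L) * P.T := mul_nonneg hlamL P.hT
  have hK : 0 ≤ ((P.lam + P.L) * P.T) ^ n / n.factorial * dist f₁ f₂ := by positivity
  rw [Subtype.dist_eq]
  rw [ContinuousMap.dist_le hK]
  intro t
  rw [dist_eq_norm]
  refine (P.dist_iterate_next_apply_le f₁ f₂ n t).trans ?_
  have h1 : ((P.lam + P.L) * t) ^ n ≤ ((P.lam + P.L) * P.T) ^ n := by
    apply pow_le_pow_left₀ (mul_nonneg hlamL t.2.1)
    exact mul_le_mul_of_nonneg_left t.2.2 hlamL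
  have h2 : (0:ℝ) < n.factorial := by exact_mod_cast n.factorial_pos
  gcongr

lemma exists_fixedPoint : ∃ f : ↥P.funSet, P.next f = f := by
  have hne : Nonempty ↥P.funSet := ⟨⟨_, P.const_mem_funSet⟩⟩
  have hcs : CompleteSpace ↥P.funSet := P.isClosed_funSet.completeSpace_coe
  obtain ⟨n, hn⟩ := (((FloorSemiring.tendsto_pow_div_factorial_atTop ((P.lam + P.L) * P.T)).eventually
    (gt_mem_nhds zero_lt_one)).exists)
  have hlamL : 0 ≤ P.lam + P.L := by linarith [P.lam_pos, P.hL]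
  have hbase : 0 ≤ (P.lam + P.L) * P.T := mul_nonneg hlamL P.hT
  have hnn : 0 ≤ ((P.lam + P.L) * P.T) ^ n / n.factorial := by positivity
  set K : NNReal := ⟨((P.lam + P.L) * P.T) ^ n / n.factorial, hnn⟩ with hK
  have hcontr : ContractingWith K ((P.next)^[n]) := by
    constructor
    · exact_mod_cast hn
    · apply LipschitzWith.of_dist_le_mul
      intro f₁ f₂
      exact P.dist_iterate_next_le f₁ f₂ n
  exact ⟨hcontr.fixedPoint ((P.next)^[n]),
    ContractingWith.isFixedPt_fixedPoint_iterate hcontr⟩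

lemma sol_eq {f : ↥P.funSet} (hfix : P.next f = f) {t : ℝ} (ht : t ∈ Set.Icc 0 P.T) :
    P.ext f.1 t = P.nextFun f.1 t := by
  conv_lhs => rw [← hfix]
  rw [ext, next_apply, P.proj_coe ht]

lemma sol_zero {f : ↥P.funSet} (hfix : P.next f = f) : P.ext f.1 0 = P.cbar := by
  rw [P.sol_eq hfix (Set.left_mem_Icc.2 P.hT)]
  simp [nextFun]

lemma sol_hasDeriv {f : ↥P.funSet} (hfix : P.next f = f) {t : ℝ} (ht : t ∈ Set.Icc 0 P.T) :
    HasDerivWithinAt (P.ext f.1) (P.A t (P.ext f.1 t)) (Set.Icc 0 P.T) t := by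
  haveI : Fact (t ∈ Set.Icc (0:ℝ) P.T) := ⟨ht⟩
  have hw := P.continuous_w f.2
  have hprim : HasDerivWithinAt (fun u => ∫ s in (0:ℝ)..u, P.w f.1 s) (P.w f.1 t)
      (Set.Icc 0 P.T) t :=
    intervalIntegral.integral_hasDerivWithinAt_right (hw.intervalIntegrable 0 t)
      (hw.stronglyMeasurableAtFilter _ _) hw.continuousWithinAt
  have hscal : HasDerivWithinAt (fun u : ℝ => Real.exp (-(P.lam * u)))
      (-P.lam * Real.exp (-(P.lam * t))) (Set.Icc 0 P.T) t := by
    have : HasDerivAt (fun u : ℝ => Real.exp (-(P.lam * u)))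
        (-P.lam * Real.exp (-(P.lam * t))) t := by
      simpa [mul_comm] using (((hasDerivAt_id t).const_mul P.lam).neg).exp
    exact this.hasDerivWithinAt
  have hF := hscal.smul (hprim.const_add P.cbar)
  have hab : Real.exp (-(P.lam * t)) * Real.exp (P.lam * t) = 1 := by
    rw [← Real.exp_add, neg_add_cancel, Real.exp_zero]
  have hcbarint : P.cbar + (∫ s in (0:ℝ)..t, P.w f.1 s) = Real.exp (P.lam * t) • P.ext f.1 t := by
    rw [P.sol_eq hfix ht, nextFun, smul_smul, mul_comm (Real.exp (P.lam * t)), hab, one_smul]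
  have hD : Real.exp (-(P.lam * t)) • P.w f.1 t +
      (-P.lam * Real.exp (-(P.lam * t))) • (P.cbar + ∫ s in (0:ℝ)..t, P.w f.1 s)
      = P.A t (P.ext f.1 t) := by
    rw [hcbarint]
    show Real.exp (-(P.lam * t)) • (Real.exp (P.lam * t) • (P.lam • P.ext f.1 t + P.vA f.1 t))
      + _ = _
    rw [smul_smul, smul_smul, hab, one_smul, mul_assoc, hab, mul_one, P.vA_eq ht]
    module
  rw [hD] at hF
  refine hF.congr (fun u hu => ?_) (P.sol_eq hfix ht)
  exact P.sol_eq hfix hu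

theorem exists_sol : ∃ c : ℝ → E, c 0 = P.cbar ∧ (∀ t ∈ Set.Icc 0 P.T, c t ∈ P.C) ∧
    ContinuousOn c (Set.Icc 0 P.T) ∧
    (∀ t ∈ Set.Icc 0 P.T, HasDerivWithinAt c (P.A t (c t)) (Set.Icc 0 P.T) t) := by
  obtain ⟨f, hfix⟩ := P.exists_fixedPoint
  exact ⟨P.ext f.1, P.sol_zero hfix, fun t _ => P.ext_mem f.2 t,
    (P.continuous_ext f.1).continuousOn, fun t ht => P.sol_hasDeriv hfix ht⟩

end BrezisData

/-- Grönwall estimate for two solutions. -/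
theorem brezis_gronwall {E : Type*} [NormedAddCommGroup E] [NormedSpace ℝ E]
    (C : Set E) (T L : ℝ) (A : ℝ → E → E)
    (h1 : ∀ t ∈ Set.Icc 0 T, ∀ c₁ ∈ C, ∀ c₂ ∈ C, ‖A t c₁ - A t c₂‖ ≤ L * ‖c₁ - c₂‖)
    (c₁ c₂ : ℝ → E)
    (hm₁ : ∀ t ∈ Set.Icc 0 T, c₁ t ∈ C) (hm₂ : ∀ t ∈ Set.Icc 0 T, c₂ t ∈ C)
    (hcont₁ : ContinuousOn c₁ (Set.Icc 0 T)) (hcont₂ : ContinuousOn c₂ (Set.Icc 0 T))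
    (hd₁ : ∀ t ∈ Set.Icc 0 T, HasDerivWithinAt c₁ (A t (c₁ t)) (Set.Icc 0 T) t)
    (hd₂ : ∀ t ∈ Set.Icc 0 T, HasDerivWithinAt c₂ (A t (c₂ t)) (Set.Icc 0 T) t) :
    ∀ t ∈ Set.Icc 0 T, ‖c₁ t - c₂ t‖ ≤ Real.exp (L * t) * ‖c₁ 0 - c₂ 0‖ := by
  intro t ht
  have hf : ContinuousOn (fun s => c₁ s - c₂ s) (Set.Icc 0 T) := hcont₁.sub hcont₂
  have hf' : ∀ s ∈ Set.Ico 0 T, HasDerivWithinAt (fun u => c₁ u - c₂ u)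
      (A s (c₁ s) - A s (c₂ s)) (Set.Ici s) s := by
    intro s hs
    have hmem : Set.Icc 0 T ∈ nhdsWithin s (Set.Ici s) := Icc_mem_nhdsGE_of_mem hs
    exact ((hd₁ s ⟨hs.1, hs.2.le⟩).sub (hd₂ s ⟨hs.1, hs.2.le⟩)).mono_of_mem_nhdsWithin hmem
  have hbound : ∀ s ∈ Set.Ico 0 T, ‖A s (c₁ s) - A s (c₂ s)‖ ≤ L * ‖c₁ s - c₂ s‖ + 0 := by
    intro s hs
    rw [add_zero]
    exact h1 s ⟨hs.1, hs.2.le⟩ _ (hm₁ s ⟨hs.1, hs.2.le⟩) _ (hm₂ s ⟨hs.1, hs.2.le⟩)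
  have := norm_le_gronwallBound_of_norm_deriv_right_le hf hf' le_rfl hbound t ht
  rwa [gronwallBound_ε0, sub_zero, mul_comm] at this

/-- Brezis' well-posedness theorem for ODEs in a closed convex subset `C` of a
Banach space: under uniform Lipschitz continuity in `c`, continuity in `t`, and the
subtangentiality condition, for every initial datum `c̄ ∈ C` there is a unique `C¹`
solution with values in `C`; and any two solutions satisfy
`‖c¹_t − c²_t‖ ≤ e^{Lt}‖c¹_0 − c²_0‖`. -/
theorem stmt15 {E : Type*} [NormedAddCommGroup E] [NormedSpace ℝ E]
    [CompleteSpace E]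
    (C : Set E) (hC : IsClosed C) (hconv : Convex ℝ C) (hCne : C.Nonempty)
    (T L : ℝ) (hT : 0 ≤ T) (hL : 0 ≤ L)
    (A : ℝ → E → E)
    (h1 : ∀ t ∈ Set.Icc 0 T, ∀ c₁ ∈ C, ∀ c₂ ∈ C,
      ‖A t c₁ - A t c₂‖ ≤ L * ‖c₁ - c₂‖)
    (h2 : ∀ c ∈ C, ContinuousOn (fun t => A t c) (Set.Icc 0 T))
    (h3 : ∀ R > (0 : ℝ), ∃ θ > (0 : ℝ), ∀ t ∈ Set.Icc 0 T, ∀ c ∈ C,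
      ‖c‖ ≤ R → c + θ • A t c ∈ C) :
    (∀ cbar ∈ C, ∃ c : ℝ → E, (c 0 = cbar ∧ IsBrezisSol C T A c) ∧
      ∀ c' : ℝ → E, c' 0 = cbar → IsBrezisSol C T A c' →
        Set.EqOn c c' (Set.Icc 0 T)) ∧
    (∀ c₁ c₂ : ℝ → E, IsBrezisSol C T A c₁ → IsBrezisSol C T A c₂ →
      ∀ t ∈ Set.Icc 0 T,
        ‖c₁ t - c₂ t‖ ≤ Real.exp (L * t) * ‖c₁ 0 - c₂ 0‖) := by
  have gron : ∀ c₁ c₂ : ℝ → E, IsBrezisSol C T A c₁ → IsBrezisSol C T A c₂ →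
      ∀ t ∈ Set.Icc 0 T, ‖c₁ t - c₂ t‖ ≤ Real.exp (L * t) * ‖c₁ 0 - c₂ 0‖ := by
    intro c₁ c₂ hs₁ hs₂
    exact brezis_gronwall C T L A h1 c₁ c₂ hs₁.1 hs₂.1 hs₁.2.1 hs₂.2.1 hs₁.2.2 hs₂.2.2
  refine ⟨?_, gron⟩
  intro cbar hcbar
  obtain ⟨t₀, ht₀, hmax'⟩ := isCompact_Icc.exists_isMaxOn (Set.nonempty_Icc.2 hT)
    ((h2 cbar hcbar).norm)
  have hmax : ∀ t ∈ Set.Icc 0 T, ‖A t cbar‖ ≤ ‖A t₀ cbar‖ := fun t htt => hmax' htt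
  have hMnn : 0 ≤ ‖A t₀ cbar‖ := norm_nonneg _
  have hRpos : (0:ℝ) < ‖cbar‖ + ‖A t₀ cbar‖ / (L+1) * (Real.exp ((L+1)*T) - 1) + 1 := by
    have h1' : (1:ℝ) ≤ Real.exp ((L+1)*T) := by
      rw [Real.one_le_exp_iff]
      have : (0:ℝ) < L + 1 := by linarith
      positivity
    have : 0 ≤ ‖A t₀ cbar‖ / (L+1) * (Real.exp ((L+1)*T) - 1) := by
      have hL1 : (0:ℝ) < L + 1 := by linarith
      have : 0 ≤ Real.exp ((L+1)*T) - 1 := by linarith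
      positivity
    positivity
  obtain ⟨θ, hθpos, hθ⟩ := h3 _ hRpos
  set P : BrezisData E :=
    ⟨C, T, L, ‖A t₀ cbar‖, θ, A, cbar, hC, hconv, hT, hL, hMnn, hθpos, hcbar, h1, h2,
      hmax, hθ⟩ with hP
  obtain ⟨c, hc0, hcmem, hccont, hcderiv⟩ := P.exists_sol
  refine ⟨c, ⟨hc0, hcmem, hccont, hcderiv⟩, ?_⟩
  intro c' hc'0 hsol' t ht
  have hle := gron c c' ⟨hcmem, hccont, hcderiv⟩ hsol' t ht
  rw [hc0, hc'0, sub_self, norm_zero, mul_zero] at hle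
  exact sub_eq_zero.1 (norm_le_zero_iff.1 hle)
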